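/- Let F be a field of characteristic p > 0 and let G be a finite p-group satisfying the following condition (*): for every element g of G not lying in the center Z(G), there exists a nontrivial subgroup H of Z(G) such that gH is contained in the conjugacy class of g. If the nilpotency class of G is greater than 2, then the group algebra F[G] is not a centrally essential ring. -/

import Mathlib

/-- A ring `R` is *centrally essential* if for every nonzero `r ∈ R` there is a central
element `c` such that `c * r` is a nonzero central element. -/
def IsCentrallyEssential (R : Type*) [Ring R] : Prop :=
  ∀ r : R, r ≠ 0 → ∃ c ∈ Subring.center R, c * r ≠ 0 ∧ c * r ∈ Subring.center R

/-- If `T : K → F` is invariant under right multiplication by a subgroup `H` whose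
cardinality vanishes in `F`, then the sum of `T` over `K` is zero. -/
lemma sum_eq_zero_of_rightInvariant {K : Type*} [Group K] [Fintype K] {F : Type*}
    [CommRing F] (H : Subgroup K) (T : K → F)
    (hT : ∀ z : K, ∀ h ∈ H, T (z * h) = T z)
    (hcard : ((Nat.card H : ℕ) : F) = 0) : ∑ z : K, T z = 0 := by
  classical
  letI : Fintype (K ⧸ H) := Fintype.ofFinite _
  rw [← Finset.sum_fiberwise Finset.univ (fun z : K => (QuotientGroup.mk z : K ⧸ H)) T]
  refine Finset.sum_eq_zero fun q _ => ?_
  have hout : ∀ z : K, (QuotientGroup.mk z : K ⧸ H) = q → T z = T q.out := by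
    intro z hz
    have h1 : (QuotientGroup.mk q.out : K ⧸ H) = QuotientGroup.mk z := by
      rw [QuotientGroup.out_eq', hz]
    have h2 : q.out⁻¹ * z ∈ H := QuotientGroup.eq.mp h1
    have := hT q.out _ h2
    rwa [mul_inv_cancel_left] at this
  have hconst : ∀ z ∈ Finset.univ.filter
      (fun z : K => (QuotientGroup.mk z : K ⧸ H) = q), T z = T q.out := by
    intro z hz
    exact hout z (Finset.mem_filter.mp hz).2
  rw [Finset.sum_congr rfl hconst, Finset.sum_const]
  have hcardfilter : (Finset.univ.filter
      (fun z : K => (QuotientGroup.mk z : K ⧸ H) = q)).card = Nat.card H := by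
    rw [Nat.card_eq_fintype_card, ← Fintype.card_coe]
    refine Fintype.card_congr ?_
    refine Equiv.mk
      (fun z => (⟨q.out⁻¹ * z.1, by
        have := (Finset.mem_filter.mp z.2).2
        have h1 : (QuotientGroup.mk q.out : K ⧸ H) = QuotientGroup.mk z.1 := by
          rw [QuotientGroup.out_eq', this]
        exact QuotientGroup.eq.mp h1⟩ : H))
      (fun h => ⟨q.out * h.1, by
        simp only [Finset.mem_filter, Finset.mem_univ, true_and]
        rw [← QuotientGroup.out_eq' q]
        exact (QuotientGroup.eq.mpr (by simpa using h.2)).symm⟩)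
      (fun z => by ext; simp)
      (fun h => by ext; simp)
  rw [hcardfilter, nsmul_eq_mul, hcard, zero_mul]

open MonoidAlgebra in
theorem not_centrally_essential_of_condition_star
    (F : Type*) [Field F] (p : ℕ) [Fact p.Prime] [CharP F p]
    (G : Type*) [Group G] [Fintype G] (hG : IsPGroup p G)
    (hstar : ∀ g : G, g ∉ Subgroup.center G →
      ∃ H : Subgroup G, H ≤ Subgroup.center G ∧ H ≠ ⊥ ∧
        ∀ h ∈ H, ∃ x : G, x * g * x⁻¹ = g * h)
    (h2 : upperCentralSeries G 2 ≠ ⊤) :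
    ¬ IsCentrallyEssential (MonoidAlgebra F G) := by
  classical
  intro hCE
  -- Choose `a ∉ Z₂(G)`.
  obtain ⟨a, ha⟩ : ∃ a : G, a ∉ upperCentralSeries G 2 := by
    by_contra h
    push_neg at h
    exact h2 (top_unique fun x _ => h x)
  -- Choose `x₀` with `k := a * x₀ * a⁻¹ * x₀⁻¹` noncentral.
  obtain ⟨x₀, hk⟩ : ∃ x₀ : G, a * x₀ * a⁻¹ * x₀⁻¹ ∉ Subgroup.center G := by
    by_contra h
    push_neg at h
    refine ha ?_
    have : a ∈ Subgroup.upperCentralSeries G (1 + 1) := by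
      rw [Subgroup.mem_upperCentralSeries_succ_iff]
      intro y
      rw [Subgroup.upperCentralSeries_one]
      exact h y
    exact this
  set k : G := a * x₀ * a⁻¹ * x₀⁻¹ with hk_def
  set Zc : Subgroup G := Subgroup.center G with hZc
  -- The sum over the center.
  set Zhat : MonoidAlgebra F G := ∑ z : Zc, single (z : G) (1 : F) with hZhat
  -- Any element of the algebra commutes with `single z 1` for central `z`.
  have hsingle_comm : ∀ (u : MonoidAlgebra F G) (z : G), z ∈ Zc →
      u * single z 1 = single z 1 * u := by
    intro u z hz
    ext w
    rw [coeff_mul_single_apply, coeff_single_mul_apply, mul_comm]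
    congr 2
    have hzi : z⁻¹ ∈ Subgroup.center G := Subgroup.inv_mem _ hz
    exact (Subgroup.mem_center_iff.mp hzi) w
  have hZhat_comm : ∀ u : MonoidAlgebra F G, u * Zhat = Zhat * u := by
    intro u
    rw [hZhat, Finset.mul_sum, Finset.sum_mul]
    exact Finset.sum_congr rfl fun z _ => hsingle_comm u z z.2
  -- Coefficient formula for `u * Zhat`.
  have hcoeff : ∀ (u : MonoidAlgebra F G) (y : G),
      (u * Zhat).coeff y = ∑ z : Zc, u.coeff (y * (z : G)) := by
    intro u y
    rw [hZhat, Finset.mul_sum]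
    rw [coeff_sum, Finsupp.finset_sum_apply]
    have h1 : ∀ z : Zc, (u * single (z : G) (1 : F)).coeff y = u.coeff (y * (z : G)⁻¹) := by
      intro z
      rw [coeff_mul_single_apply, mul_one]
    rw [Finset.sum_congr rfl fun z _ => h1 z]
    exact Fintype.sum_equiv (Equiv.inv Zc) _ _ (fun z => by simp)
  -- The witness element `r = a * Zhat`.
  set r : MonoidAlgebra F G := single a (1 : F) * Zhat with hr
  have hr0 : r ≠ 0 := by
    intro h0
    have : (single a (1 : F) * Zhat).coeff a = 0 := by rw [← hr, h0]; rfl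
    rw [hcoeff] at this
    have heval : ∀ z : Zc, (single a (1 : F)).coeff (a * (z : G)) = if z = 1 then 1 else 0 := by
      intro z
      rw [coeff_single, Finsupp.single_apply]
      by_cases hz1 : z = 1
      · simp [hz1]
      · have : a ≠ a * (z : G) := by
          intro hEq
          refine hz1 ?_
          have : (z : G) = 1 := by
            have := hEq.symm
            rwa [mul_eq_left] at this
          exact Subtype.ext this
        simp [this, hz1]
    rw [Finset.sum_congr rfl fun z _ => heval z] at this
    rw [Finset.sum_ite_eq' Finset.univ (1 : Zc) (fun _ => (1 : F))] at this
    simp at this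
  obtain ⟨c, hc_center, hcr0, hcr_center⟩ := hCE r hr0
  -- `c` is a class function.
  have hcf : ∀ x y : G, c.coeff (x * y * x⁻¹) = c.coeff y := by
    intro x y
    have hcx := Subring.mem_center_iff.mp hc_center (single x⁻¹ (1 : F))
    have h := congrArg (fun u : MonoidAlgebra F G => u.coeff (y * x⁻¹)) hcx
    simp only [coeff_single_mul_apply, coeff_mul_single_apply, one_mul, mul_one, inv_inv] at h
    calc c.coeff (x * y * x⁻¹) = c.coeff (x * (y * x⁻¹)) := by rw [mul_assoc]
      _ = c.coeff (y * x⁻¹ * x) := h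
      _ = c.coeff y := by rw [inv_mul_cancel_right]
  -- `cz := c * Zhat`.
  set cz : MonoidAlgebra F G := c * Zhat with hcz
  -- rewrite c * r
  have hcr_eq : c * r = cz * single a 1 := by
    calc c * r = c * (single a 1 * Zhat) := by rw [hr]
      _ = c * (Zhat * single a 1) := by rw [hZhat_comm]
      _ = c * Zhat * single a 1 := by rw [mul_assoc]
      _ = cz * single a 1 := by rw [hcz]
  -- Step B : cz (y * k) = cz y for all y.
  have hB : ∀ y : G, cz.coeff (y * k) = cz.coeff y := by
    intro y
    have hcomm := Subring.mem_center_iff.mp hcr_center (single x₀ (1 : F))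
    -- single x₀ 1 * (c * r) = (c * r) * single x₀ 1
    have hxc := Subring.mem_center_iff.mp hc_center (single x₀ (1 : F))
    -- LHS : single x₀ * c * r = c * single x₀ * (single a * Zhat)
    --     = c * Zhat * single (x₀ * a)
    have hL : single x₀ (1:F) * (c * r) = cz * single (x₀ * a) (1:F) := by
      calc single x₀ (1:F) * (c * r) = single x₀ (1:F) * c * r := by rw [mul_assoc]
        _ = c * single x₀ (1:F) * r := by rw [hxc]
        _ = c * (single x₀ (1:F) * r) := by rw [mul_assoc]
        _ = c * (single x₀ (1:F) * (single a 1 * Zhat)) := by rw [hr]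
        _ = c * (single (x₀ * a) (1:F) * Zhat) := by
              rw [show single x₀ (1:F) * (single a (1:F) * Zhat)
                  = single (x₀ * a) (1:F) * Zhat by
                rw [← mul_assoc, single_mul_single, one_mul]]
        _ = c * (Zhat * single (x₀ * a) (1:F)) := by rw [hZhat_comm]
        _ = c * Zhat * single (x₀ * a) (1:F) := by rw [mul_assoc]
        _ = cz * single (x₀ * a) (1:F) := by rw [hcz]
    have hR : (c * r) * single x₀ (1:F) = cz * single (a * x₀) (1:F) := by
      rw [hcr_eq, mul_assoc, single_mul_single, one_mul]
    have hEq : cz * single (a * x₀) (1:F) = cz * single (x₀ * a) (1:F) := by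
      rw [← hR, ← hL]
      exact hcomm.symm
    have heq2 := congrArg (fun u : MonoidAlgebra F G => u.coeff (y * (a * x₀))) hEq
    simp only [coeff_mul_single_apply, mul_one] at heq2
    rw [mul_inv_cancel_right] at heq2
    have hgrp : y * k = y * (a * x₀) * (x₀ * a)⁻¹ := by rw [hk_def]; group
    rw [hgrp]
    exact heq2.symm
  -- Step C : cz vanishes off the center.
  have hC : ∀ y : G, y ∉ Zc → cz.coeff y = 0 := by
    intro y hy
    obtain ⟨H, hHle, hHbot, hHconj⟩ := hstar y hy
    rw [hcz, hcoeff]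
    refine sum_eq_zero_of_rightInvariant (H.subgroupOf Zc) (fun z : Zc => c.coeff (y * (z : G)))
      ?_ ?_
    · intro z h hmem
      obtain ⟨x, hx⟩ := hHconj (h : G) (Subgroup.mem_subgroupOf.mp hmem)
      have hz_comm : ∀ w : G, w * (z : G) = (z : G) * w := fun w =>
        Subgroup.mem_center_iff.mp z.2 w
      have hh_comm : ∀ w : G, w * (h : G) = (h : G) * w := fun w =>
        Subgroup.mem_center_iff.mp h.2 w
      have key : x * (y * (z : G)) * x⁻¹ = y * ((z : G) * (h : G)) := by
        calc x * (y * (z : G)) * x⁻¹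
            = x * y * ((z : G) * x⁻¹) := by group
          _ = x * y * (x⁻¹ * (z : G)) := by rw [← hz_comm x⁻¹]
          _ = x * y * x⁻¹ * (z : G) := by rw [← mul_assoc]
          _ = y * (h : G) * (z : G) := by rw [hx]
          _ = y * ((z : G) * (h : G)) := by rw [mul_assoc, ← hh_comm (z : G)]
      show c.coeff (y * ((z * h : Zc) : G)) = c.coeff (y * (z : G))
      have hcoe : ((z * h : Zc) : G) = (z : G) * (h : G) := rfl
      rw [hcoe, ← key]
      exact hcf x (y * (z : G))
    · have hcardEq : Nat.card (H.subgroupOf Zc) = Nat.card H :=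
        Nat.card_congr (Subgroup.subgroupOfEquivOfLe hHle).toEquiv
      rw [hcardEq]
      obtain ⟨n, hn⟩ := IsPGroup.iff_card.mp (hG.to_subgroup H)
      have hn0 : n ≠ 0 := by
        intro h0
        rw [h0, pow_zero] at hn
        exact hHbot (Subgroup.eq_bot_of_card_eq H (by simpa using hn))
      rw [hn]
      push_cast
      rw [CharP.cast_eq_zero F p, zero_pow hn0]
  -- Step D : cz = 0.
  have hD : cz = 0 := by
    ext y
    by_cases hy : y ∈ Zc
    · rw [← hB y]
      refine hC (y * k) ?_
      intro hmem
      exact hk (by simpa using Subgroup.mul_mem _ (Subgroup.inv_mem _ hy) hmem)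
    · exact hC y hy
  rw [hcr_eq, hD, zero_mul] at hcr0
  exact hcr0 rfl
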